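/- Let $(X_i)_{i\ge1}$ be i.i.d. with $F(x)=1-x^{-\alpha}$, $x\ge1$, $\alpha>0$, and $\bar X_n=\max_{i\le n}X_i$. For $c\in(0,1)$ set $v_c(n)=c\,n^{1/\alpha}(\log\log n)^{-1/\alpha}$. Then almost surely $\bar X_n\ge v_c(n)$ eventually for all $n$. -/

import Mathlib

open MeasureTheory ProbabilityTheory Filter

noncomputable def paretoLowerBound (α c : ℝ) (n : ℕ) : ℝ :=
  c * (n : ℝ) ^ (1 / α) * (Real.log (Real.log n)) ^ (-(1 / α))

private lemma one_sub_pow_le_exp_aux {p : ℝ} (hp1 : p ≤ 1) (m : ℕ) :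
    (1 - p) ^ m ≤ Real.exp (-((m : ℝ) * p)) := by
  have h1 : 1 - p ≤ Real.exp (-p) := by
    have := Real.add_one_le_exp (-p); linarith
  calc (1 - p) ^ m ≤ (Real.exp (-p)) ^ m := pow_le_pow_left₀ (by linarith) h1 m
    _ = Real.exp (-((m : ℝ) * p)) := by
        rw [← Real.exp_nat_mul]; ring_nf

set_option maxHeartbeats 1000000 in
theorem pareto_max_lower_bound_eventually
    {Ω : Type*} [MeasureSpace Ω] [IsProbabilityMeasure (ℙ : Measure Ω)]
    (α c : ℝ) (hα : 0 < α) (hc : c ∈ Set.Ioo (0 : ℝ) 1)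
    (X : ℕ → Ω → ℝ) (hmeas : ∀ i, Measurable (X i))
    (hindep : iIndepFun X ℙ)
    (hdist : ∀ i, ∀ x : ℝ, 1 ≤ x → ℙ {ω | x < X i ω} = ENNReal.ofReal (x ^ (-α))) :
    ∀ᵐ ω ∂ℙ, ∀ᶠ n : ℕ in atTop, ∃ i ∈ Finset.Icc 1 n, paretoLowerBound α c n ≤ X i ω := by
  obtain ⟨hc0, hc1⟩ := hc
  set β : ℝ := c ^ (-α) with hβdef
  have hβpos : 0 < β := Real.rpow_pos_of_pos hc0 _
  have hβ : 1 < β := by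
    rw [hβdef]
    exact (Real.one_lt_rpow_iff_of_pos hc0).2 (Or.inr ⟨hc1, by linarith⟩)
  set θ : ℝ := (1 + β) / 2 with hθdef
  have hθ1 : 1 < θ := by rw [hθdef]; linarith
  have hθ0 : 0 < θ := by linarith
  have hθβ : θ < β := by rw [hθdef]; linarith
  set u : ℝ := β / θ with hudef
  have hu : 1 < u := (one_lt_div hθ0).2 hθβ
  have hu0 : 0 < u := by linarith
  set t : ℝ := (1 + u) / (2 * u) with htdef
  have ht0 : 0 < t := by positivity
  have ht1 : t < 1 := by rw [htdef, div_lt_one (by linarith)]; linarith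
  set s : ℝ := u * t ^ 2 with hsdef
  have hs : 1 < s := by
    have hseq : s - 1 = (u - 1) ^ 2 / (4 * u) := by
      rw [hsdef, htdef]; field_simp; ring
    have hpos : 0 < (u - 1) ^ 2 / (4 * u) :=
      div_pos (pow_pos (by linarith) 2) (by linarith)
    linarith
  -- the subsequence
  set N : ℕ → ℕ := fun k => ⌊θ ^ k⌋₊ with hNdef
  have hNle : ∀ k, (N k : ℝ) ≤ θ ^ k := fun k => Nat.floor_le (by positivity)
  have hNge : ∀ k, θ ^ k - 1 ≤ (N k : ℝ) := fun k => (Nat.sub_one_lt_floor _).le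
  have hNmono : Monotone N := fun i j h => Nat.floor_mono (pow_le_pow_right₀ hθ1.le h)
  have hNtop : Tendsto N atTop atTop := by
    rw [tendsto_atTop]
    intro M
    filter_upwards [(tendsto_pow_atTop_atTop_of_one_lt hθ1).eventually_ge_atTop (M : ℝ)]
      with k hk
    exact Nat.le_floor hk
  -- thresholds
  set v : ℕ → ℝ := fun k => c * ((N (k+1) : ℝ)) ^ (1/α) *
    (Real.log (Real.log (N k))) ^ (-(1/α)) with hvdef
  set p : ℕ → ℝ := fun k => β * Real.log (Real.log (N k)) / (N (k+1) : ℝ) with hpdef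
  set S : ℕ → Set Ω := fun k => ⋂ i ∈ Finset.Icc 1 (N k), X i ⁻¹' Set.Iic (v k) with hSdef
  -- the key eventual bound
  have key : ∀ᶠ k : ℕ in atTop, ℙ (S k) ≤ ENNReal.ofReal ((k : ℝ) ^ (-s)) := by
    have ev1 : ∀ᶠ k : ℕ in atTop, (2 : ℝ) ≤ θ ^ k :=
      (tendsto_pow_atTop_atTop_of_one_lt hθ1).eventually_ge_atTop 2
    have ev2 : ∀ᶠ k : ℕ in atTop, 3 ≤ N k := hNtop.eventually_ge_atTop 3
    have ev3 : ∀ᶠ k : ℕ in atTop, 1 / (1 - t) ≤ θ ^ k :=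
      (tendsto_pow_atTop_atTop_of_one_lt hθ1).eventually_ge_atTop _
    have ev4 : ∀ᶠ k : ℕ in atTop, (1 + Real.log 2) / Real.log θ ≤ (k : ℝ) ^ (1 - t) :=
      ((tendsto_rpow_atTop (by linarith)).comp tendsto_natCast_atTop_atTop).eventually_ge_atTop _
    have ev5 : ∀ᶠ k : ℕ in atTop, (4 * β ^ 2 : ℝ) ≤ (N (k+1) : ℝ) := by
      have h5 : Tendsto (fun k : ℕ => (N (k+1) : ℝ)) atTop atTop :=
        tendsto_natCast_atTop_atTop.comp (hNtop.comp (tendsto_add_atTop_nat 1))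
      exact h5.eventually_ge_atTop _
    have ev6 : ∀ᶠ k : ℕ in atTop, 2 ≤ k := eventually_ge_atTop 2
    filter_upwards [ev1, ev2, ev3, ev4, ev5, ev6] with k h1 h2 h3 h4 h5 h6
    -- notation
    have hA3 : (3:ℝ) ≤ (N k : ℝ) := by exact_mod_cast h2
    set A : ℝ := (N k : ℝ) with hAdef
    set B : ℝ := (N (k+1) : ℝ) with hBdef
    have hA0 : (0:ℝ) < A := by linarith
    have hAB : A ≤ B := by
      rw [hAdef, hBdef]; exact_mod_cast hNmono (Nat.le_succ k)
    have hB0 : (0:ℝ) < B := lt_of_lt_of_le hA0 hAB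
    have hLa1 : 1 < Real.log A := by
      rw [Real.lt_log_iff_exp_lt hA0]
      have := Real.exp_one_lt_d9
      linarith
    have hLa0 : 0 < Real.log A := by linarith
    set L : ℝ := Real.log (Real.log A) with hLdef
    have hL0 : 0 < L := Real.log_pos hLa1
    have hvk : v k = c * B ^ (1/α) * L ^ (-(1/α)) := rfl
    have hpk : p k = β * L / B := rfl
    have hv0 : 0 < v k := by
      rw [hvk]
      exact mul_pos (mul_pos hc0 (Real.rpow_pos_of_pos hB0 _)) (Real.rpow_pos_of_pos hL0 _)
    have eB : (B ^ (1/α)) ^ (-α) = B⁻¹ := by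
      rw [← Real.rpow_mul hB0.le, show (1/α) * (-α) = -1 by field_simp, Real.rpow_neg_one]
    have eL : (L ^ (-(1/α))) ^ (-α) = L := by
      rw [← Real.rpow_mul hL0.le, show (-(1/α)) * (-α) = 1 by field_simp, Real.rpow_one]
    have hpval : (v k) ^ (-α) = p k := by
      rw [hvk, hpk,
        Real.mul_rpow (mul_nonneg hc0.le (Real.rpow_nonneg hB0.le _)) (Real.rpow_nonneg hL0.le _),
        Real.mul_rpow hc0.le (Real.rpow_nonneg hB0.le _), eB, eL]
      ring
    -- bounds on p
    have hLlogA : L ≤ Real.log A := by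
      have := Real.log_le_sub_one_of_pos hLa0
      rw [← hLdef] at this
      linarith
    have hlogAB : Real.log A ≤ Real.log B := Real.log_le_log hA0 hAB
    have hsqlog : Real.log B ≤ 2 * Real.sqrt B := by
      have h₁ : Real.log (Real.sqrt B) ≤ Real.sqrt B - 1 :=
        Real.log_le_sub_one_of_pos (Real.sqrt_pos.2 hB0)
      have h₂ : Real.log (Real.sqrt B) = Real.log B / 2 := Real.log_sqrt hB0.le
      linarith
    have hsqB : 2 * β ≤ Real.sqrt B := by
      have h' : Real.sqrt (4 * β^2) ≤ Real.sqrt B := Real.sqrt_le_sqrt h5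
      rwa [show (4:ℝ) * β^2 = (2*β)^2 by ring, Real.sqrt_sq (by linarith)] at h'
    have hp1 : p k ≤ 1 := by
      rw [hpk, div_le_one hB0]
      have hBB : Real.sqrt B * Real.sqrt B = B := Real.mul_self_sqrt hB0.le
      have hL2 : L ≤ 2 * Real.sqrt B := by linarith
      have hm1 : β * L ≤ β * (2 * Real.sqrt B) := mul_le_mul_of_nonneg_left hL2 hβpos.le
      have hm2 : (2 * β) * Real.sqrt B ≤ Real.sqrt B * Real.sqrt B :=
        mul_le_mul_of_nonneg_right hsqB (Real.sqrt_nonneg B)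
      have hm3 : β * (2 * Real.sqrt B) = (2 * β) * Real.sqrt B := by ring
      linarith
    have hp0 : 0 ≤ p k := by rw [hpk]; positivity
    have hv1 : 1 ≤ v k := by
      by_contra hcon
      push_neg at hcon
      have : 1 < (v k) ^ (-α) :=
        (Real.one_lt_rpow_iff_of_pos hv0).2 (Or.inr ⟨hcon, by linarith⟩)
      rw [hpval] at this
      linarith
    -- measure computation
    have hprod : ℙ (S k) = ∏ i ∈ Finset.Icc 1 (N k), ℙ (X i ⁻¹' Set.Iic (v k)) :=
      hindep.meas_biInter (fun i _ => ⟨Set.Iic (v k), measurableSet_Iic, rfl⟩)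
    have hfactor : ∀ i : ℕ, ℙ (X i ⁻¹' Set.Iic (v k)) ≤ ENNReal.ofReal (1 - p k) := by
      intro i
      have hms : MeasurableSet (X i ⁻¹' Set.Iic (v k)) := (hmeas i) measurableSet_Iic
      have hcompl : {ω | v k < X i ω} = (X i ⁻¹' Set.Iic (v k))ᶜ := by
        ext ω; simp [Set.mem_Iic, not_le]
      have hd := hdist i (v k) hv1
      rw [hcompl, prob_compl_eq_one_sub hms, hpval] at hd
      have hle1 : ℙ (X i ⁻¹' Set.Iic (v k)) ≤ 1 := prob_le_one
      have heq : ℙ (X i ⁻¹' Set.Iic (v k)) = 1 - ENNReal.ofReal (p k) := by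
        rw [← hd, ENNReal.sub_sub_cancel ENNReal.one_ne_top hle1]
      rw [heq, ENNReal.ofReal_sub 1 hp0, ENNReal.ofReal_one]
    have hcard : (Finset.Icc 1 (N k)).card = N k := by
      rw [Nat.card_Icc]; omega
    have hmain : ℙ (S k) ≤ ENNReal.ofReal (Real.exp (-(A * p k))) := by
      rw [hprod]
      calc ∏ i ∈ Finset.Icc 1 (N k), ℙ (X i ⁻¹' Set.Iic (v k))
          ≤ ∏ _i ∈ Finset.Icc 1 (N k), ENNReal.ofReal (1 - p k) :=
            Finset.prod_le_prod' (fun i _ => hfactor i)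
        _ = ENNReal.ofReal (1 - p k) ^ (N k) := by rw [Finset.prod_const, hcard]
        _ = ENNReal.ofReal ((1 - p k) ^ (N k)) := (ENNReal.ofReal_pow (by linarith) _).symm
        _ ≤ ENNReal.ofReal (Real.exp (-(A * p k))) :=
            ENNReal.ofReal_le_ofReal (one_sub_pow_le_exp_aux hp1 (N k))
    -- exponent estimate
    have hABratio : t / θ ≤ A / B := by
      have h₁ : (θ^k - 1)/θ^(k+1) ≤ A / B :=
        div_le_div₀ hA0.le (hNge k) hB0 (hNle (k+1))
      have h₂ : t / θ ≤ (θ^k - 1)/θ^(k+1) := by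
        rw [div_le_div_iff₀ hθ0 (by positivity)]
        have h3' : 1 ≤ θ^k * (1 - t) := by
          rw [div_le_iff₀ (by linarith : (0:ℝ) < 1 - t)] at h3
          linarith
        have hps : θ^(k+1) = θ^k * θ := pow_succ θ k
        have h0 : 0 ≤ θ * (θ^k * (1 - t) - 1) := mul_nonneg hθ0.le (by linarith)
        have hexp0 : θ * (θ^k * (1 - t) - 1) = (θ^k - 1) * θ - t * (θ^k * θ) := by ring
        rw [hps]
        linarith
      linarith
    have hk1 : 1 ≤ k := by omega
    have hkpos : (0:ℝ) < (k:ℝ) := by exact_mod_cast Nat.pos_of_ne_zero (by omega)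
    have hk1' : (1:ℝ) ≤ (k:ℝ) := by exact_mod_cast hk1
    have hlogk0 : 0 ≤ Real.log k := Real.log_nonneg hk1'
    have hLlower : t * Real.log k ≤ L := by
      have hlogθ : 0 < Real.log θ := Real.log_pos hθ1
      have hstep1 : Real.log (θ^k / 2) ≤ Real.log A := by
        apply Real.log_le_log (by positivity)
        linarith [hNge k]
      have hlogdiv : Real.log (θ^k/2) = k * Real.log θ - Real.log 2 := by
        rw [Real.log_div (by positivity) two_ne_zero, Real.log_pow]
      have hktpos : (0:ℝ) < (k:ℝ)^t := Real.rpow_pos_of_pos hkpos _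
      have hkt1 : 1 ≤ (k:ℝ)^t := Real.one_le_rpow hk1' ht0.le
      have hmulkt : (k:ℝ)^t * (k:ℝ)^(1-t) = (k:ℝ) := by
        rw [← Real.rpow_add hkpos, show t + (1-t) = (1:ℝ) by ring, Real.rpow_one]
      have h4' : (1 + Real.log 2) ≤ (k:ℝ)^(1-t) * Real.log θ := by
        rw [div_le_iff₀ hlogθ] at h4; linarith
      have hlog2 : (0:ℝ) ≤ Real.log 2 := Real.log_nonneg one_le_two
      have hcore : (k:ℝ)^t ≤ (k:ℝ) * Real.log θ - Real.log 2 := by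
        have hkeq : (k:ℝ)^t * ((k:ℝ)^(1-t) * Real.log θ) = (k:ℝ) * Real.log θ := by
          rw [← mul_assoc, hmulkt]
        have hD : (k:ℝ)^t * (1 + Real.log 2) ≤ (k:ℝ)^t * ((k:ℝ)^(1-t) * Real.log θ) :=
          mul_le_mul_of_nonneg_left h4' hktpos.le
        have h2' : Real.log 2 ≤ (k:ℝ)^t * Real.log 2 := le_mul_of_one_le_left hlog2 hkt1
        have hDeq : (k:ℝ)^t * (1 + Real.log 2) = (k:ℝ)^t + (k:ℝ)^t * Real.log 2 := by ring
        linarith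
      have hLaKt : (k:ℝ)^t ≤ Real.log A := by
        rw [hlogdiv] at hstep1; linarith
      have hfin : Real.log ((k:ℝ)^t) ≤ L := Real.log_le_log hktpos hLaKt
      rwa [Real.log_rpow hkpos] at hfin
    have hexp : s * Real.log k ≤ A * p k := by
      have hrw : A * p k = β * (A/B) * L := by rw [hpk]; ring
      rw [hrw]
      have hgoal : s * Real.log k = β * (t/θ) * (t * Real.log k) := by
        rw [hsdef, hudef]; field_simp
      rw [hgoal]
      have h₁ : β * (t/θ) * (t * Real.log k) ≤ β * (A/B) * (t * Real.log k) :=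
        mul_le_mul_of_nonneg_right
          (mul_le_mul_of_nonneg_left hABratio hβpos.le)
          (mul_nonneg ht0.le hlogk0)
      have h₂ : β * (A/B) * (t * Real.log k) ≤ β * (A/B) * L :=
        mul_le_mul_of_nonneg_left hLlower
          (mul_nonneg hβpos.le (div_nonneg hA0.le hB0.le))
      linarith
    refine hmain.trans (ENNReal.ofReal_le_ofReal ?_)
    rw [Real.rpow_def_of_pos hkpos]
    apply Real.exp_le_exp.2
    have : Real.log k * (-s) = -(s * Real.log k) := by ring
    rw [this]
    exact neg_le_neg hexp
  obtain ⟨K₀, hK₀⟩ := eventually_atTop.1 key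
  obtain ⟨K₁, hK₁⟩ := eventually_atTop.1 (hNtop.eventually_ge_atTop 3)
  set K₂ : ℕ := max K₀ K₁ with hK₂def
  -- Borel–Cantelli
  have hsum : (∑' j : ℕ, ℙ (S (j + K₂))) ≠ ⊤ := by
    have hb : ∀ j : ℕ, ℙ (S (j + K₂)) ≤ ENNReal.ofReal (((j + K₂ : ℕ) : ℝ) ^ (-s)) :=
      fun j => hK₀ (j + K₂) (le_trans (le_max_left _ _) (Nat.le_add_left _ _))
    have hsummable : Summable (fun j : ℕ => ((j + K₂ : ℕ) : ℝ) ^ (-s)) :=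
      (summable_nat_add_iff K₂).2 (Real.summable_nat_rpow.2 (by linarith))
    have hle := calc (∑' j : ℕ, ℙ (S (j + K₂)))
        ≤ ∑' j : ℕ, ENNReal.ofReal (((j + K₂ : ℕ) : ℝ) ^ (-s)) := ENNReal.tsum_le_tsum hb
      _ = ENNReal.ofReal (∑' j : ℕ, ((j + K₂ : ℕ) : ℝ) ^ (-s)) :=
          (ENNReal.ofReal_tsum_of_nonneg (fun j => Real.rpow_nonneg (Nat.cast_nonneg _) _)
            hsummable).symm
    exact ne_top_of_le_ne_top ENNReal.ofReal_ne_top hle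
  filter_upwards [MeasureTheory.ae_eventually_notMem hsum] with ω hω
  obtain ⟨J, hJ⟩ := eventually_atTop.1 hω
  set K : ℕ := K₂ + J with hKdef
  have hnotmem : ∀ k, K ≤ k → ω ∉ S k := by
    intro k hk
    have h1 : J ≤ k - K₂ := by omega
    have h2 : (k - K₂) + K₂ = k := by omega
    have := hJ (k - K₂) h1
    rwa [h2] at this
  -- constant for the findGreatest bound
  obtain ⟨m, hm⟩ := exists_nat_ge (1/(θ-1))
  set Cb : ℕ := m + 1 with hCbdef
  have hθ1' : (0:ℝ) < θ - 1 := by linarith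
  have hCb : 1 ≤ (Cb:ℝ) * (θ - 1) := by
    have hm' : 1/(θ-1) ≤ (Cb:ℝ) := by
      rw [hCbdef]; push_cast; linarith
    rw [div_le_iff₀ hθ1'] at hm'
    linarith
  have hCb1 : 1 ≤ Cb := by omega
  rw [eventually_atTop]
  refine ⟨max (N K) K, fun n hn => ?_⟩
  have hnNK : N K ≤ n := le_trans (le_max_left _ _) hn
  have hnK : K ≤ n := le_trans (le_max_right _ _) hn
  set Bn : ℕ := Cb * (n + 1) with hBndef
  have hKBn : K ≤ Bn := by
    have h1 : n + 1 ≤ Cb * (n + 1) := Nat.le_mul_of_pos_left (n+1) (by omega)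
    omega
  have hQK : N K ≤ n := hnNK
  set k : ℕ := Nat.findGreatest (fun j => N j ≤ n) Bn with hkdef
  have hk0 : N k ≤ n := Nat.findGreatest_spec (P := fun j => N j ≤ n) hKBn hQK
  have hkK : K ≤ k := Nat.le_findGreatest (P := fun j => N j ≤ n) hKBn hQK
  have hNBn : ¬ (N Bn ≤ n) := by
    intro hQB
    have h1 : (1:ℝ) + (Bn:ℝ) * (θ - 1) ≤ θ ^ Bn := by
      have h := one_add_mul_le_pow (by linarith : (-2:ℝ) ≤ θ - 1) Bn
      calc (1:ℝ) + (Bn:ℝ) * (θ-1) = 1 + (Bn:ℕ) * (θ-1) := by norm_num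
        _ ≤ (1 + (θ-1)) ^ Bn := h
        _ = θ ^ Bn := by ring_nf
    have hBn' : ((n:ℝ)+1) ≤ (Bn:ℝ) * (θ-1) := by
      have h2 : ((n:ℝ)+1) * 1 ≤ ((n:ℝ)+1) * ((Cb:ℝ)*(θ-1)) :=
        mul_le_mul_of_nonneg_left hCb (by positivity)
      have h3 : (Bn:ℝ) = (Cb:ℝ) * ((n:ℝ)+1) := by rw [hBndef]; push_cast; ring
      calc ((n:ℝ)+1) = ((n:ℝ)+1) * 1 := by ring
        _ ≤ ((n:ℝ)+1) * ((Cb:ℝ)*(θ-1)) := h2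
        _ = (Bn:ℝ) * (θ-1) := by rw [h3]; ring
    have h3 : n + 2 ≤ N Bn := by
      apply Nat.le_floor
      push_cast
      linarith
    omega
  have hkBn : k ≤ Bn := Nat.findGreatest_le Bn
  have hkne : k ≠ Bn := by
    intro h
    exact hNBn (h ▸ hk0)
  have hnk1 : n < N (k+1) := by
    by_contra hcon
    push_neg at hcon
    exact Nat.findGreatest_is_greatest (Nat.lt_succ_self k) (by omega) hcon
  have hωk := hnotmem k hkK
  have hex : ∃ i ∈ Finset.Icc 1 (N k), v k < X i ω := by
    by_contra hcon
    push_neg at hcon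
    exact hωk (Set.mem_iInter₂.2 fun i hi => hcon i hi)
  obtain ⟨i, hi, hvlt⟩ := hex
  have hiK : 3 ≤ N k :=
    hK₁ k (le_trans (le_trans (le_trans (le_max_right K₀ K₁) (Nat.le_add_right K₂ J)) (le_refl K)) hkK)
  have hNkn : N k ≤ n := hk0
  have hnN1 : n ≤ N (k+1) := Nat.le_of_lt hnk1
  refine ⟨i, Finset.mem_Icc.2 ⟨(Finset.mem_Icc.1 hi).1, le_trans (Finset.mem_Icc.1 hi).2 hNkn⟩, ?_⟩
  refine le_trans ?_ hvlt.le
  -- deterministic comparison paretoLowerBound α c n ≤ v k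
  have hA3 : (3:ℝ) ≤ (N k : ℝ) := by exact_mod_cast hiK
  have hA0 : (0:ℝ) < (N k : ℝ) := by linarith
  have hn3 : (3:ℝ) ≤ (n:ℝ) := le_trans hA3 (by exact_mod_cast hNkn)
  have hn0 : (0:ℝ) < (n:ℝ) := by linarith
  have hlogNk1 : 1 < Real.log (N k : ℝ) := by
    rw [Real.lt_log_iff_exp_lt hA0]
    have := Real.exp_one_lt_d9
    linarith
  have hloglogpos : 0 < Real.log (Real.log (N k : ℝ)) := Real.log_pos hlogNk1
  have hlogmono : Real.log (N k : ℝ) ≤ Real.log (n:ℝ) :=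
    Real.log_le_log hA0 (by exact_mod_cast hNkn)
  have hllmono : Real.log (Real.log (N k : ℝ)) ≤ Real.log (Real.log (n:ℝ)) :=
    Real.log_le_log (by linarith) hlogmono
  have h1' : (n:ℝ) ^ (1/α) ≤ ((N (k+1)) : ℝ) ^ (1/α) :=
    Real.rpow_le_rpow hn0.le (by exact_mod_cast hnN1) (by positivity)
  have h2' : (Real.log (Real.log (n:ℝ))) ^ (-(1/α)) ≤ (Real.log (Real.log (N k : ℝ))) ^ (-(1/α)) :=
    Real.rpow_le_rpow_of_nonpos hloglogpos hllmono (neg_nonpos.2 (by positivity))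
  have hvkr : v k = c * ((N (k+1)) : ℝ)^(1/α) * (Real.log (Real.log ((N k) : ℝ)))^(-(1/α)) := rfl
  rw [hvkr]
  show c * (n:ℝ) ^ (1/α) * (Real.log (Real.log (n : ℝ))) ^ (-(1/α)) ≤ _
  have hnn1 : 0 ≤ (Real.log (Real.log (n:ℝ))) ^ (-(1/α)) := Real.rpow_nonneg (by linarith) _
  calc c * (n:ℝ)^(1/α) * (Real.log (Real.log (n:ℝ)))^(-(1/α))
      ≤ c * ((N (k+1)):ℝ)^(1/α) * (Real.log (Real.log (n:ℝ)))^(-(1/α)) :=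
        mul_le_mul_of_nonneg_right (mul_le_mul_of_nonneg_left h1' hc0.le) hnn1
    _ ≤ c * ((N (k+1)):ℝ)^(1/α) * (Real.log (Real.log (N k : ℝ)))^(-(1/α)) :=
        mul_le_mul_of_nonneg_left h2' (mul_nonneg hc0.le (Real.rpow_nonneg (Nat.cast_nonneg _) _))
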